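/- Let m ≥ 2 and n ≥ 2 be integers. Then E_S(C^3_{m,n}) < E_S(C^3_{m+1,n}); that is, the sum of the absolute values of the eigenvalues of S(m,n) is strictly less than the sum of the absolute values of the eigenvalues of S(m+1,n). In particular, for fixed n the Seidel energy of C^3_{m,n} is strictly increasing in m. -/

import Mathlib

open Polynomial Matrix

/-- The Seidel matrix of the complete 3-uniform bipartite hypergraph `C³_{m,n}`. -/
noncomputable def seidelS (m n : ℕ) : Matrix (Fin m ⊕ Fin n) (Fin m ⊕ Fin n) ℝ :=
  fun i j =>
    if i = j then 0
    else
      match i, j with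
      | Sum.inl _, Sum.inl _ => 1 - 2 * (n : ℝ)
      | Sum.inr _, Sum.inr _ => 1 - 2 * (m : ℝ)
      | _, _ => 1 - 2 * ((m : ℝ) + (n : ℝ) - 2)

/-- Type-I hyperedge-deleted Seidel matrix. -/
noncomputable def seidelI (m n : ℕ) : Matrix (Fin m ⊕ Fin n) (Fin m ⊕ Fin n) ℝ :=
  fun i j =>
    match i, j with
    | Sum.inl a, Sum.inr b =>
        if a.val = 0 ∧ b.val ≤ 1 then 1 - 2 * ((m : ℝ) + (n : ℝ) - 3)
        else seidelS m n (Sum.inl a) (Sum.inr b)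
    | Sum.inr b, Sum.inl a =>
        if a.val = 0 ∧ b.val ≤ 1 then 1 - 2 * ((m : ℝ) + (n : ℝ) - 3)
        else seidelS m n (Sum.inr b) (Sum.inl a)
    | Sum.inr a, Sum.inr b =>
        if (a.val = 0 ∧ b.val = 1) ∨ (a.val = 1 ∧ b.val = 0) then 1 - 2 * ((m : ℝ) - 1)
        else seidelS m n (Sum.inr a) (Sum.inr b)
    | Sum.inl a, Sum.inl b => seidelS m n (Sum.inl a) (Sum.inl b)

/-- Type-II hyperedge-deleted Seidel matrix. -/
noncomputable def seidelII (m n : ℕ) : Matrix (Fin m ⊕ Fin n) (Fin m ⊕ Fin n) ℝ :=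
  fun i j =>
    match i, j with
    | Sum.inl a, Sum.inl b =>
        if (a.val = 0 ∧ b.val = 1) ∨ (a.val = 1 ∧ b.val = 0) then 1 - 2 * ((n : ℝ) - 1)
        else seidelS m n (Sum.inl a) (Sum.inl b)
    | Sum.inl a, Sum.inr b =>
        if a.val ≤ 1 ∧ b.val = 0 then 1 - 2 * ((m : ℝ) + (n : ℝ) - 3)
        else seidelS m n (Sum.inl a) (Sum.inr b)
    | Sum.inr b, Sum.inl a =>
        if a.val ≤ 1 ∧ b.val = 0 then 1 - 2 * ((m : ℝ) + (n : ℝ) - 3)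
        else seidelS m n (Sum.inr b) (Sum.inl a)
    | Sum.inr a, Sum.inr b => seidelS m n (Sum.inr a) (Sum.inr b)

/-- Seidel energy: sum of absolute values of the eigenvalues (roots of the
characteristic polynomial, with multiplicity). -/
noncomputable def seidelEnergy {k : Type*} [Fintype k] [DecidableEq k]
    (M : Matrix k k ℝ) : ℝ :=
  (M.charpoly.roots.map (fun x => |x|)).sum

noncomputable def sT (m n : ℕ) : ℝ := ((m:ℝ)-1)*(2*n-1) + ((n:ℝ)-1)*(2*m-1)
noncomputable def sP (m n : ℕ) : ℝ :=
  (2*(n:ℝ)-1)*(2*(m:ℝ)-1)*((m:ℝ)-1)*((n:ℝ)-1) - (m:ℝ)*n*(2*(m:ℝ)+2*n-5)^2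

set_option maxHeartbeats 2000000 in
lemma seidel_det (m n : ℕ) (hm : 1 ≤ m) (hn : 1 ≤ n) (x : ℝ)
    (hx1 : x - (2*(n:ℝ)-1) ≠ 0) (hx2 : x - (2*(m:ℝ)-1) ≠ 0) :
    (x • (1 : Matrix (Fin m ⊕ Fin n) (Fin m ⊕ Fin n) ℝ) - seidelS m n).det
      = (x - (2*(n:ℝ)-1))^(m-1) * (x - (2*(m:ℝ)-1))^(n-1)
        * (x^2 + sT m n * x + sP m n) := by
  set a : ℝ := 1 - 2*(n:ℝ) with ha
  set b : ℝ := 1 - 2*(m:ℝ) with hb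
  set c : ℝ := 1 - 2*((m:ℝ)+(n:ℝ)-2) with hc
  set d : Fin m ⊕ Fin n → ℝ :=
    Sum.elim (fun _ => x - (2*(n:ℝ)-1)) (fun _ => x - (2*(m:ℝ)-1)) with hdd
  have hd1 : ∀ i, d i ≠ 0 := by
    rintro (i|i)
    · simpa [hdd] using hx1
    · simpa [hdd] using hx2
  set U : Matrix (Fin m ⊕ Fin n) (Fin 2) ℝ :=
    Matrix.of (fun i t => Sum.elim (fun _ => if t = 0 then a else c)
      (fun _ => if t = 0 then c else b) i) with hU
  set V : Matrix (Fin 2) (Fin m ⊕ Fin n) ℝ :=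
    Matrix.of (fun t j => Sum.elim (fun _ => if t = 0 then (1:ℝ) else 0)
      (fun _ => if t = 0 then (0:ℝ) else 1) j) with hV
  have hmat : x • (1 : Matrix (Fin m ⊕ Fin n) (Fin m ⊕ Fin n) ℝ) - seidelS m n
      = Matrix.diagonal d - U * V := by
    ext i j
    rcases i with i | i <;> rcases j with j | j
    · by_cases hij : i = j <;>
        simp [hij, seidelS, Matrix.mul_apply, Fin.sum_univ_two, hU, hV, hdd,
          Matrix.diagonal_apply, Matrix.one_apply, Matrix.smul_apply, Matrix.sub_apply,
          Sum.inl.injEq] <;> ring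
    · simp [seidelS, Matrix.mul_apply, Fin.sum_univ_two, hU, hV, hdd,
        Matrix.diagonal_apply, Matrix.one_apply, Matrix.smul_apply, Matrix.sub_apply]
      ring
    · simp [seidelS, Matrix.mul_apply, Fin.sum_univ_two, hU, hV, hdd,
        Matrix.diagonal_apply, Matrix.one_apply, Matrix.smul_apply, Matrix.sub_apply]
      ring
    · by_cases hij : i = j <;>
        simp [hij, seidelS, Matrix.mul_apply, Fin.sum_univ_two, hU, hV, hdd,
          Matrix.diagonal_apply, Matrix.one_apply, Matrix.smul_apply, Matrix.sub_apply,
          Sum.inr.injEq] <;> ring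
  set E : Matrix (Fin m ⊕ Fin n) (Fin m ⊕ Fin n) ℝ :=
    Matrix.diagonal (fun i => (d i)⁻¹) with hE
  have hDE : Matrix.diagonal d * E = 1 := by
    rw [hE, Matrix.diagonal_mul_diagonal,
      show (fun i => d i * (d i)⁻¹) = fun _ => (1:ℝ) from funext fun i => mul_inv_cancel₀ (hd1 i),
      Matrix.diagonal_one]
  have key : Matrix.diagonal d - U * V = Matrix.diagonal d * (1 - (E * U) * V) := by
    rw [Matrix.mul_sub, mul_one, ← Matrix.mul_assoc, ← Matrix.mul_assoc, hDE, Matrix.one_mul]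
  rw [hmat, key, Matrix.det_mul, Matrix.det_one_sub_mul_comm]
  have hdet_diag : (Matrix.diagonal d).det
      = (x - (2*(n:ℝ)-1))^m * (x - (2*(m:ℝ)-1))^n := by
    rw [Matrix.det_diagonal, Fintype.prod_sum_type]
    simp [hdd]
  set W : Matrix (Fin 2) (Fin 2) ℝ := V * (E * U) with hW
  have hEU : ∀ j s, (E * U) j s = (d j)⁻¹ * U j s := by
    intro j s; rw [hE, Matrix.diagonal_mul]
  have hW00 : W 0 0 = m * ((x - (2*(n:ℝ)-1))⁻¹ * a) := by
    rw [hW, Matrix.mul_apply]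
    simp only [hEU]
    simp [Fintype.sum_sum_type, hEU, hU, hV, hdd, mul_comm]
  have hW01 : W 0 1 = m * ((x - (2*(n:ℝ)-1))⁻¹ * c) := by
    rw [hW, Matrix.mul_apply]
    simp only [hEU]
    simp [Fintype.sum_sum_type, hEU, hU, hV, hdd, mul_comm]
  have hW10 : W 1 0 = n * ((x - (2*(m:ℝ)-1))⁻¹ * c) := by
    rw [hW, Matrix.mul_apply]
    simp only [hEU]
    simp [Fintype.sum_sum_type, hEU, hU, hV, hdd, mul_comm]
  have hW11 : W 1 1 = n * ((x - (2*(m:ℝ)-1))⁻¹ * b) := by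
    rw [hW, Matrix.mul_apply]
    simp only [hEU]
    simp [Fintype.sum_sum_type, hEU, hU, hV, hdd, mul_comm]
  have hdet2 : (1 - W).det = (1 - W 0 0) * (1 - W 1 1) - (-(W 0 1)) * (-(W 1 0)) := by
    rw [Matrix.det_fin_two]
    simp [Matrix.sub_apply, Matrix.one_apply]
  rw [hdet_diag, hdet2, hW00, hW01, hW11, hW10]
  have hpm : (x - (2*(n:ℝ)-1))^m = (x - (2*(n:ℝ)-1))^(m-1) * (x - (2*(n:ℝ)-1)) := by
    rw [← pow_succ, Nat.sub_add_cancel hm]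
  have hpn : (x - (2*(m:ℝ)-1))^n = (x - (2*(m:ℝ)-1))^(n-1) * (x - (2*(m:ℝ)-1)) := by
    rw [← pow_succ, Nat.sub_add_cancel hn]
  rw [hpm, hpn]
  have key2 : (x - (2*(n:ℝ)-1)) * (x - (2*(m:ℝ)-1)) *
      ((1 - (m:ℝ) * ((x - (2*(n:ℝ)-1))⁻¹ * a)) * (1 - (n:ℝ) * ((x - (2*(m:ℝ)-1))⁻¹ * b))
        - (-((m:ℝ) * ((x - (2*(n:ℝ)-1))⁻¹ * c))) * (-((n:ℝ) * ((x - (2*(m:ℝ)-1))⁻¹ * c))))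
      = x^2 + sT m n * x + sP m n := by
    simp only [ha, hb, hc, sT, sP]
    field_simp
    ring
  linear_combination ((x - (2*(n:ℝ)-1))^(m-1) * (x - (2*(m:ℝ)-1))^(n-1)) * key2

noncomputable def sD (m n : ℕ) : ℝ := ((m:ℝ)-(n:ℝ))^2 + 4*(m:ℝ)*(n:ℝ)*(2*(m:ℝ)+2*(n:ℝ)-5)^2

lemma sD_nonneg (m n : ℕ) : 0 ≤ sD m n := by unfold sD; positivity

lemma sD_eq (m n : ℕ) : sD m n = (sT m n)^2 - 4 * sP m n := by
  unfold sD sT sP; ring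

noncomputable def sR (m n : ℕ) : ℝ := (-(sT m n) + Real.sqrt (sD m n))/2
noncomputable def sS (m n : ℕ) : ℝ := (-(sT m n) - Real.sqrt (sD m n))/2

lemma quad_factor (m n : ℕ) (x : ℝ) :
    (x - sR m n) * (x - sS m n) = x^2 + sT m n * x + sP m n := by
  have h : Real.sqrt (sD m n) ^ 2 = sT m n ^ 2 - 4 * sP m n := by
    rw [Real.sq_sqrt (sD_nonneg m n), sD_eq]
  unfold sR sS
  linear_combination (-(1:ℝ)/4) * h

lemma seidel_charpoly (m n : ℕ) (hm : 1 ≤ m) (hn : 1 ≤ n) :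
    (seidelS m n).charpoly
      = (X - C (2*(n:ℝ)-1))^(m-1) * (X - C (2*(m:ℝ)-1))^(n-1)
        * ((X - C (sR m n)) * (X - C (sS m n))) := by
  apply Polynomial.eq_of_infinite_eval_eq
  apply Set.Infinite.mono (s := {x : ℝ | x ∉ ({2*(n:ℝ)-1, 2*(m:ℝ)-1} : Set ℝ)})
  swap
  · exact ((Set.finite_singleton _).insert _).infinite_compl
  intro x hx
  simp only [Set.mem_setOf_eq, Set.mem_insert_iff, Set.mem_singleton_iff, not_or] at hx
  obtain ⟨hx1, hx2⟩ := hx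
  have hx1' : x - (2*(n:ℝ)-1) ≠ 0 := sub_ne_zero.mpr hx1
  have hx2' : x - (2*(m:ℝ)-1) ≠ 0 := sub_ne_zero.mpr hx2
  show _ = _
  have hlhs : Polynomial.eval x (seidelS m n).charpoly
      = (x • (1 : Matrix (Fin m ⊕ Fin n) (Fin m ⊕ Fin n) ℝ) - seidelS m n).det := by
    rw [Matrix.charpoly]
    have h1 := RingHom.map_det (Polynomial.evalRingHom x) (Matrix.charmatrix (seidelS m n))
    simp only [RingHom.mapMatrix_apply, Polynomial.coe_evalRingHom] at h1
    rw [h1]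
    congr 1
    ext i j
    by_cases hij : i = j
    · subst hij
      simp [Matrix.charmatrix_apply_eq, Matrix.map_apply, Matrix.sub_apply,
        Matrix.smul_apply, Matrix.one_apply]
    · simp [Matrix.charmatrix_apply_ne _ _ _ hij, Matrix.map_apply, Matrix.sub_apply,
        Matrix.smul_apply, Matrix.one_apply, hij]
  rw [hlhs, seidel_det m n hm hn x hx1' hx2']
  simp only [Polynomial.eval_mul, Polynomial.eval_pow, Polynomial.eval_sub,
    Polynomial.eval_X, Polynomial.eval_C]
  rw [quad_factor]

lemma sP_nonpos (m n : ℕ) (hm : 2 ≤ m) (hn : 2 ≤ n) : sP m n ≤ 0 := by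
  have hm' : (2:ℝ) ≤ (m:ℝ) := by exact_mod_cast hm
  have hn' : (2:ℝ) ≤ (n:ℝ) := by exact_mod_cast hn
  have h1 : (2*(n:ℝ)-1)*(2*(m:ℝ)-1) ≤ (2*(m:ℝ)+2*(n:ℝ)-5)^2 := by nlinarith
  have h2 : ((m:ℝ)-1)*((n:ℝ)-1) ≤ (m:ℝ)*(n:ℝ) := by nlinarith
  have h3 : (2*(n:ℝ)-1)*(2*(m:ℝ)-1) * (((m:ℝ)-1)*((n:ℝ)-1))
      ≤ (2*(m:ℝ)+2*(n:ℝ)-5)^2 * ((m:ℝ)*(n:ℝ)) :=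
    mul_le_mul h1 h2 (by nlinarith) (by positivity)
  unfold sP
  nlinarith [h3]

lemma sT_nonneg (m n : ℕ) (hm : 2 ≤ m) (hn : 2 ≤ n) : 0 ≤ sT m n := by
  have hm' : (2:ℝ) ≤ (m:ℝ) := by exact_mod_cast hm
  have hn' : (2:ℝ) ≤ (n:ℝ) := by exact_mod_cast hn
  unfold sT; nlinarith

lemma seidelEnergy_eq (m n : ℕ) (hm : 2 ≤ m) (hn : 2 ≤ n) :
    seidelEnergy (seidelS m n) = sT m n + Real.sqrt (sD m n) := by
  have hm' : (2:ℝ) ≤ (m:ℝ) := by exact_mod_cast hm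
  have hn' : (2:ℝ) ≤ (n:ℝ) := by exact_mod_cast hn
  have hT := sT_nonneg m n hm hn
  have hP := sP_nonpos m n hm hn
  have hsqT : sT m n ≤ Real.sqrt (sD m n) := by
    rw [show sT m n = Real.sqrt ((sT m n)^2) from (Real.sqrt_sq hT).symm]
    apply Real.sqrt_le_sqrt
    rw [sD_eq]; linarith
  have hr : 0 ≤ sR m n := by unfold sR; linarith
  have hs : sS m n ≤ 0 := by
    unfold sS; have := Real.sqrt_nonneg (sD m n); linarith
  rw [seidelEnergy, seidel_charpoly m n (by omega) (by omega)]
  have h1 : ((X : ℝ[X]) - C (2*(n:ℝ)-1))^(m-1) ≠ 0 :=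
    pow_ne_zero _ (Polynomial.X_sub_C_ne_zero _)
  have h2 : ((X : ℝ[X]) - C (2*(m:ℝ)-1))^(n-1) ≠ 0 :=
    pow_ne_zero _ (Polynomial.X_sub_C_ne_zero _)
  have h3 : ((X : ℝ[X]) - C (sR m n)) * ((X : ℝ[X]) - C (sS m n)) ≠ 0 :=
    mul_ne_zero (Polynomial.X_sub_C_ne_zero _) (Polynomial.X_sub_C_ne_zero _)
  rw [Polynomial.roots_mul (mul_ne_zero (mul_ne_zero h1 h2) h3),
    Polynomial.roots_mul (mul_ne_zero h1 h2),
    Polynomial.roots_mul h3,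
    Polynomial.roots_pow, Polynomial.roots_pow,
    Polynomial.roots_X_sub_C, Polynomial.roots_X_sub_C,
    Polynomial.roots_X_sub_C, Polynomial.roots_X_sub_C]
  simp only [Multiset.map_add, Multiset.sum_add, Multiset.nsmul_singleton,
    Multiset.map_replicate, Multiset.sum_replicate, Multiset.map_singleton,
    Multiset.sum_singleton, nsmul_eq_mul]
  have hcm : ((m - 1 : ℕ) : ℝ) = (m:ℝ) - 1 := by
    rw [Nat.cast_sub (by omega)]; norm_num
  have hcn : ((n - 1 : ℕ) : ℝ) = (n:ℝ) - 1 := by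
    rw [Nat.cast_sub (by omega)]; norm_num
  rw [hcm, hcn, abs_of_nonneg (by linarith : (0:ℝ) ≤ 2*(n:ℝ)-1),
    abs_of_nonneg (by linarith : (0:ℝ) ≤ 2*(m:ℝ)-1),
    abs_of_nonneg hr, abs_of_nonpos hs]
  unfold sR sS sT
  ring

theorem stmt18 (m n : ℕ) (hm : 2 ≤ m) (hn : 2 ≤ n) :
    seidelEnergy (seidelS m n) < seidelEnergy (seidelS (m + 1) n) := by
  rw [seidelEnergy_eq m n hm hn, seidelEnergy_eq (m+1) n (by omega) hn]
  have hm' : (2:ℝ) ≤ (m:ℝ) := by exact_mod_cast hm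
  have hn' : (2:ℝ) ≤ (n:ℝ) := by exact_mod_cast hn
  have hsD : sD m n ≤ sD (m+1) n := by
    unfold sD; push_cast
    nlinarith [mul_nonneg (mul_nonneg (by linarith : (0:ℝ) ≤ 4*(n:ℝ))
        (by linarith : (0:ℝ) ≤ (m:ℝ))) (by linarith : (0:ℝ) ≤ 2*(m:ℝ)+2*(n:ℝ)-4),
      mul_nonneg (by linarith : (0:ℝ) ≤ 4*(n:ℝ))
        (by nlinarith : (0:ℝ) ≤ (2*(m:ℝ)+2*(n:ℝ)-3)^2 - 9)]
  have hsT : sT m n < sT (m+1) n := by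
    unfold sT; push_cast; nlinarith
  have := Real.sqrt_le_sqrt hsD
  linarith
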